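/- Let (ν⁽ˡ⁾(X))_{l=0}^{L} be Bochner-integrable random vectors in ℝ^p and set Z⁽ˡ⁾ := ν⁽ˡ⁾(X) − E[ν⁽ˡ⁾(X)] for each l, with Z⁽⁰⁾ = 0. Suppose (Z⁽ˡ⁾)_{l=0}^{L} is a weak martingale, i.e. E[ Z⁽ⁱ⁾ | σ(Z⁽ʲ⁾) ] = Z⁽ʲ⁾ almost surely whenever j < i, and that ‖Z⁽ˡ⁾ − Z⁽ˡ⁻¹⁾‖₂ ≤ M almost surely for every l ∈ {1,…,L}, with M > 0. Then for every l ∈ {1,…,L} and every a > 0, P( ‖ν⁽ˡ⁾(X) − E[ν⁽ˡ⁾(X)]‖₂ ≥ M·a ) < 2·exp( 1 − (a−1)²/(2l) ). -/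

import Mathlib

open MeasureTheory Real Set
open scoped RealInnerProductSpace

lemma aux_sinh_le (t : ℝ) (ht : 0 ≤ t) : Real.sinh t ≤ t * Real.cosh t := by
  have h : ∀ s : ℝ, HasDerivAt (fun u => u * Real.cosh u - Real.sinh u) (s * Real.sinh s) s := by
    intro s
    have h1 : HasDerivAt (fun u : ℝ => u * Real.cosh u) (1 * Real.cosh s + s * Real.sinh s) s :=
      (hasDerivAt_id s).mul (Real.hasDerivAt_cosh s)
    have := h1.sub (Real.hasDerivAt_sinh s)
    refine this.congr_deriv ?_; ring
  have hmono : Monotone (fun u => u * Real.cosh u - Real.sinh u) := by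
    apply monotone_of_deriv_nonneg
    · exact fun s => (h s).differentiableAt
    · intro s
      rw [(h s).deriv]
      rcases le_total 0 s with hs | hs
      · exact mul_nonneg hs (by simpa using hs)
      · have h2 : Real.sinh s ≤ 0 := by simpa using hs
        nlinarith
  have := hmono ht
  simpa using this

lemma aux_ratio_mono (c : ℝ) (hc : 0 ≤ c) :
    MonotoneOn (fun t => Real.sinh (c * t) / t) (Ioi (0:ℝ)) := by
  have hderiv : ∀ t : ℝ, t ∈ Ioi (0:ℝ) →
      HasDerivAt (fun t => Real.sinh (c * t) / t)
        ((Real.cosh (c * t) * c * t - Real.sinh (c * t)) / t ^ 2) t := by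
    intro t ht
    have h1 : HasDerivAt (fun t : ℝ => Real.sinh (c * t)) (Real.cosh (c * t) * c) t := by
      have := (Real.hasDerivAt_sinh (c * t)).comp t ((hasDerivAt_id t).const_mul c)
      simpa [mul_comm, Function.comp_def] using this
    have := h1.fun_div (hasDerivAt_id t) (ne_of_gt ht)
    simpa using this
  have : interior (Ioi (0:ℝ)) = Ioi 0 := interior_Ioi
  apply monotoneOn_of_deriv_nonneg (convex_Ioi 0)
  · exact fun t ht => ((hderiv t ht).continuousAt).continuousWithinAt
  · rw [this]; exact fun t ht => (hderiv t ht).differentiableAt.differentiableWithinAt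
  · rw [this]
    intro t ht
    rw [(hderiv t ht).deriv]
    apply div_nonneg _ (sq_nonneg t)
    have := aux_sinh_le (c * t) (mul_nonneg hc (le_of_lt ht))
    nlinarith [Real.cosh_pos (c*t)]

lemma aux_convexOn (c : ℝ) (hc : 0 ≤ c) :
    ConvexOn ℝ (Ici (0:ℝ)) (fun x => Real.cosh (c * Real.sqrt x)) := by
  have hderiv : ∀ x : ℝ, x ∈ Ioi (0:ℝ) →
      HasDerivAt (fun x => Real.cosh (c * Real.sqrt x))
        ((c / 2) * (Real.sinh (c * Real.sqrt x) / Real.sqrt x)) x := by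
    intro x hx
    have hsq : HasDerivAt Real.sqrt (1 / (2 * Real.sqrt x)) x := Real.hasDerivAt_sqrt (ne_of_gt hx)
    have h1 : HasDerivAt (fun x => c * Real.sqrt x) (c * (1 / (2 * Real.sqrt x))) x :=
      hsq.const_mul c
    have := (Real.hasDerivAt_cosh (c * Real.sqrt x)).comp x h1
    refine this.congr_deriv ?_
    have hs : Real.sqrt x ≠ 0 := ne_of_gt (Real.sqrt_pos.2 hx)
    ring
  apply MonotoneOn.convexOn_of_deriv (convex_Ici 0)
  · exact (Real.continuous_cosh.comp (continuous_const.mul Real.continuous_sqrt)).continuousOn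
  · rw [interior_Ici]
    exact fun x hx => (hderiv x hx).differentiableAt.differentiableWithinAt
  · rw [interior_Ici]
    intro x hx y hy hxy
    rw [(hderiv x hx).deriv, (hderiv y hy).deriv]
    apply mul_le_mul_of_nonneg_left _ (by positivity)
    exact aux_ratio_mono c hc (mem_Ioi.2 (Real.sqrt_pos.2 hx)) (mem_Ioi.2 (Real.sqrt_pos.2 hy))
      (Real.sqrt_le_sqrt hxy)

lemma key_scalar (c M A α : ℝ) (hc : 0 ≤ c) (hM : 0 < M) (hA : 0 ≤ A) (hα : |α| ≤ M) :
    Real.cosh (c * Real.sqrt (A ^ 2 + 2 * A * α + M ^ 2)) ≤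
      Real.cosh (c * A) * Real.cosh (c * M) +
        Real.sinh (c * A) * Real.sinh (c * M) * (α / M) := by
  have hα1 : -M ≤ α := neg_le_of_abs_le hα
  have hα2 : α ≤ M := le_of_abs_le hα
  set θ : ℝ := (M + α) / (2 * M) with hθ
  have hθ0 : 0 ≤ θ := div_nonneg (by linarith) (by positivity)
  have hθ1 : 0 ≤ 1 - θ := by
    rw [hθ]; rw [sub_nonneg, div_le_one (by positivity)]; linarith
  have hsum : θ + (1 - θ) = 1 := by ring
  have hcomb : A ^ 2 + 2 * A * α + M ^ 2 = θ * (A + M) ^ 2 + (1 - θ) * (A - M) ^ 2 := by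
    rw [hθ]; field_simp; ring
  have hconv := (aux_convexOn c hc).2 (mem_Ici.2 (sq_nonneg (A + M))) (mem_Ici.2 (sq_nonneg (A - M)))
      hθ0 hθ1 hsum
  simp only [smul_eq_mul] at hconv
  rw [← hcomb] at hconv
  have h1 : Real.sqrt ((A + M) ^ 2) = A + M := Real.sqrt_sq (by linarith)
  have h2 : Real.cosh (c * Real.sqrt ((A - M) ^ 2)) = Real.cosh (c * (A - M)) := by
    rw [Real.sqrt_sq_eq_abs]
    rcases le_total 0 (A - M) with h | h
    · rw [abs_of_nonneg h]
    · rw [abs_of_nonpos h]; rw [mul_neg, Real.cosh_neg]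
  rw [h1, h2] at hconv
  refine hconv.trans (le_of_eq ?_)
  rw [mul_add, mul_sub, Real.cosh_add, Real.cosh_sub]
  have hM' : (M:ℝ) ≠ 0 := ne_of_gt hM
  rw [hθ]
  field_simp
  ring

lemma key_vector {p : ℕ} (c M : ℝ) (hc : 0 ≤ c) (hM : 0 < M)
    (f d : EuclideanSpace ℝ (Fin p)) (hd : ‖d‖ ≤ M) :
    Real.cosh (c * ‖f + d‖) ≤
      Real.cosh (c * M) * Real.cosh (c * ‖f‖) +
        Real.sinh (c * M) / M * ⟪(Real.sinh (c * ‖f‖) / ‖f‖) • f, d⟫ := by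
  by_cases hf : f = (0 : EuclideanSpace ℝ (Fin p))
  · subst hf
    simp only [zero_add, norm_zero, mul_zero, Real.cosh_zero, smul_zero, inner_zero_left]
    rw [mul_one, add_zero]
    rw [Real.cosh_le_cosh]
    rw [abs_of_nonneg (by positivity), abs_of_nonneg (by positivity : (0:ℝ) ≤ c * M)]
    exact mul_le_mul_of_nonneg_left hd hc
  · have hA : 0 < ‖f‖ := norm_pos_iff.2 hf
    set A := ‖f‖
    set α : ℝ := ⟪f, d⟫ / A with hαdef
    have hCS : |⟪f, d⟫| ≤ A * ‖d‖ := abs_real_inner_le_norm f d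
    have hα : |α| ≤ M := by
      rw [hαdef, abs_div, abs_of_nonneg hA.le, div_le_iff₀ hA]
      calc |⟪f, d⟫| ≤ A * ‖d‖ := hCS
        _ ≤ M * A := by nlinarith
    have hsq : ‖f + d‖ ^ 2 ≤ A ^ 2 + 2 * A * α + M ^ 2 := by
      have h1 : ‖f + d‖ ^ 2 = A ^ 2 + 2 * ⟪f, d⟫ + ‖d‖ ^ 2 := norm_add_sq_real f d
      have h2 : 2 * A * α = 2 * ⟪f, d⟫ := by
        rw [hαdef]; field_simp
      have h3 : ‖d‖ ^ 2 ≤ M ^ 2 := by nlinarith [norm_nonneg d]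
      linarith
    have hmono : Real.cosh (c * ‖f + d‖) ≤
        Real.cosh (c * Real.sqrt (A ^ 2 + 2 * A * α + M ^ 2)) := by
      rw [Real.cosh_le_cosh]
      have hnn : (0:ℝ) ≤ A ^ 2 + 2 * A * α + M ^ 2 :=
        le_trans (sq_nonneg ‖f + d‖) hsq
      rw [abs_of_nonneg (by positivity), abs_of_nonneg (by positivity)]
      apply mul_le_mul_of_nonneg_left _ hc
      have := Real.sqrt_le_sqrt hsq
      rwa [Real.sqrt_sq (norm_nonneg _)] at this
    refine hmono.trans ((key_scalar c M A α hc hM hA.le hα).trans (le_of_eq ?_))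
    rw [real_inner_smul_left]
    rw [hαdef]
    field_simp

lemma coord_le_norm {p : ℕ} (x : EuclideanSpace ℝ (Fin p)) (i : Fin p) : |x i| ≤ ‖x‖ := by
  have h := EuclideanSpace.norm_eq x
  rw [h]
  rw [← Real.sqrt_sq_eq_abs]
  apply Real.sqrt_le_sqrt
  simp only [Real.norm_eq_abs, sq_abs]
  exact Finset.single_le_sum (f := fun j => x j ^ 2) (fun j _ => sq_nonneg _) (Finset.mem_univ i)

lemma condexp_proj {Ω : Type*} {m mΩ : MeasurableSpace Ω} (hm : m ≤ mΩ) (μ : @Measure Ω mΩ)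
    [IsFiniteMeasure μ] {p : ℕ} (X : Ω → EuclideanSpace ℝ (Fin p)) (hX : Integrable X μ)
    (i : Fin p) :
    (fun ω => (μ[X|m]) ω i) =ᵐ[μ] μ[fun ω => X ω i|m] := by
  haveI : SigmaFinite (μ.trim hm) := by
    have : IsFiniteMeasure (μ.trim hm) := isFiniteMeasure_trim hm
    infer_instance
  have hL : ∀ (g : Ω → EuclideanSpace ℝ (Fin p)), (fun ω => (EuclideanSpace.proj (𝕜 := ℝ) i) (g ω))
      = fun ω => g ω i := fun g => rfl
  apply ae_eq_condExp_of_forall_setIntegral_eq hm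
  · have := (EuclideanSpace.proj (𝕜 := ℝ) i).integrable_comp hX
    simpa using this
  · intro s _ _
    have hic : Integrable (μ[X|m]) μ := integrable_condExp
    have := ((EuclideanSpace.proj (𝕜 := ℝ) i).integrable_comp hic).integrableOn (s := s)
    simpa using this
  · intro s hs hμs
    have hint : IntegrableOn (μ[X|m]) s μ := integrable_condExp.integrableOn
    have h1 : ∫ ω in s, (μ[X|m]) ω i ∂μ
        = (EuclideanSpace.proj (𝕜 := ℝ) i) (∫ ω in s, (μ[X|m]) ω ∂μ) := by
      rw [← ContinuousLinearMap.integral_comp_comm _ hint]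
      rfl
    have h2 : ∫ ω in s, X ω i ∂μ = (EuclideanSpace.proj (𝕜 := ℝ) i) (∫ ω in s, X ω ∂μ) := by
      rw [← ContinuousLinearMap.integral_comp_comm _ (hX.integrableOn)]
      rfl
    rw [h1, h2, setIntegral_condExp hm hX hs]
  · exact StronglyMeasurable.aestronglyMeasurable ((EuclideanSpace.proj (𝕜 := ℝ) i).continuous.comp_stronglyMeasurable
      stronglyMeasurable_condExp)

lemma integral_inner_condexp {Ω : Type*} {m mΩ : MeasurableSpace Ω} (hm : m ≤ mΩ)
    (μ : @Measure Ω mΩ) [IsFiniteMeasure μ] {p : ℕ} (Y X : Ω → EuclideanSpace ℝ (Fin p))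
    (hYm : StronglyMeasurable[m] Y) (C : ℝ) (hYb : ∀ᵐ ω ∂μ, ‖Y ω‖ ≤ C)
    (hX : Integrable X μ) :
    ∫ ω, ⟪Y ω, X ω⟫ ∂μ = ∫ ω, ⟪Y ω, (μ[X|m]) ω⟫ ∂μ := by
  haveI : SigmaFinite (μ.trim hm) := by
    have : IsFiniteMeasure (μ.trim hm) := isFiniteMeasure_trim hm
    infer_instance
  have hYmeas : ∀ i : Fin p, StronglyMeasurable[m] (fun ω => Y ω i) :=
    fun i => (EuclideanSpace.proj (𝕜 := ℝ) i).continuous.comp_stronglyMeasurable hYm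
  have hYbi : ∀ i : Fin p, ∀ᵐ ω ∂μ, ‖Y ω i‖ ≤ C := by
    intro i
    filter_upwards [hYb] with ω hω
    exact le_trans (coord_le_norm (Y ω) i) hω
  have hXi : ∀ i : Fin p, Integrable (fun ω => X ω i) μ := by
    intro i
    have := (EuclideanSpace.proj (𝕜 := ℝ) i).integrable_comp hX
    simpa using this
  have hCXi : ∀ i : Fin p, Integrable (fun ω => (μ[X|m]) ω i) μ := by
    intro i
    have hic : Integrable (μ[X|m]) μ := integrable_condExp
    have := (EuclideanSpace.proj (𝕜 := ℝ) i).integrable_comp hic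
    simpa using this
  have hYXi : ∀ i : Fin p, Integrable (fun ω => Y ω i * X ω i) μ :=
    fun i => (hXi i).bdd_mul ((hYmeas i).mono hm).aestronglyMeasurable (hYbi i)
  have hYCXi : ∀ i : Fin p, Integrable (fun ω => Y ω i * (μ[X|m]) ω i) μ :=
    fun i => (hCXi i).bdd_mul ((hYmeas i).mono hm).aestronglyMeasurable (hYbi i)
  have hinner : ∀ (g : Ω → EuclideanSpace ℝ (Fin p)) (ω : Ω),
      ⟪Y ω, g ω⟫ = ∑ i : Fin p, Y ω i * g ω i := by
    intro g ω
    rw [PiLp.inner_apply]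
    simp [mul_comm]
  calc ∫ ω, ⟪Y ω, X ω⟫ ∂μ = ∫ ω, ∑ i : Fin p, Y ω i * X ω i ∂μ :=
        integral_congr_ae (Filter.Eventually.of_forall fun ω => hinner X ω)
    _ = ∑ i : Fin p, ∫ ω, Y ω i * X ω i ∂μ := by
        rw [integral_finset_sum _ (fun i _ => hYXi i)]
    _ = ∑ i : Fin p, ∫ ω, Y ω i * (μ[X|m]) ω i ∂μ := by
        apply Finset.sum_congr rfl
        intro i _
        have h1 : μ[fun ω => Y ω i * X ω i|m] =ᵐ[μ] fun ω => Y ω i * (μ[fun ω => X ω i|m]) ω :=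
          condExp_stronglyMeasurable_mul_of_bound hm (hYmeas i) (hXi i) C (hYbi i)
        have h2 : (fun ω => Y ω i * (μ[fun ω => X ω i|m]) ω) =ᵐ[μ]
            fun ω => Y ω i * (μ[X|m]) ω i := by
          filter_upwards [condexp_proj hm μ X hX i] with ω hω
          rw [hω]
        rw [← integral_condExp hm (f := fun ω => Y ω i * X ω i)]
        rw [integral_congr_ae (h1.trans h2)]
    _ = ∫ ω, ∑ i : Fin p, Y ω i * (μ[X|m]) ω i ∂μ := by
        rw [integral_finset_sum _ (fun i _ => hYCXi i)]
    _ = ∫ ω, ⟪Y ω, (μ[X|m]) ω⟫ ∂μ :=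
        integral_congr_ae (Filter.Eventually.of_forall fun ω => (hinner (μ[X|m]) ω).symm)

/-- Concentration of the layer outputs of a stochastic deep neural
network of constant width `p` whose centered outputs form a weak martingale: let
`(ν⁽ˡ⁾(X))_{l=0}^{L}` be Bochner-integrable random vectors in `ℝ^p`, set
`Z⁽ˡ⁾ := ν⁽ˡ⁾(X) − E[ν⁽ˡ⁾(X)]` with `Z⁽⁰⁾ = 0`; if `(Z⁽ˡ⁾)` is a weak martingale,
i.e. `E[Z⁽ⁱ⁾ | σ(Z⁽ʲ⁾)] = Z⁽ʲ⁾` a.s. whenever `j < i ≤ L`, and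
`‖Z⁽ˡ⁾ − Z⁽ˡ⁻¹⁾‖₂ ≤ M` almost surely for every `l ∈ {1,…,L}` (`M > 0`), then for
every `l ∈ {1,…,L}` and `a > 0`,
`P(‖ν⁽ˡ⁾(X) − E[ν⁽ˡ⁾(X)]‖₂ ≥ M·a) < 2 exp(1 − (a−1)²/(2l))`. -/
theorem weakMartingale_centered_layers_tail_bound
    {Ω : Type*} {mΩ : MeasurableSpace Ω} (μ : Measure Ω) [IsProbabilityMeasure μ]
    {p L : ℕ} (ν : ℕ → Ω → EuclideanSpace ℝ (Fin p))
    (hmeas : ∀ l, Measurable (ν l))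
    (hint : ∀ l, Integrable (ν l) μ)
    (hZ0 : (fun ω => ν 0 ω - ∫ ω', ν 0 ω' ∂μ) = 0)
    (hmart : ∀ i j, j < i → i ≤ L →
      μ[fun ω => ν i ω - ∫ ω', ν i ω' ∂μ|
          MeasurableSpace.comap (fun ω => ν j ω - ∫ ω', ν j ω' ∂μ) inferInstance]
        =ᵐ[μ] fun ω => ν j ω - ∫ ω', ν j ω' ∂μ)
    (M : ℝ) (hM : 0 < M)
    (hdiff : ∀ l, 1 ≤ l → l ≤ L → ∀ᵐ ω ∂μ,
      ‖(ν l ω - ∫ ω', ν l ω' ∂μ) - (ν (l - 1) ω - ∫ ω', ν (l - 1) ω' ∂μ)‖ ≤ M) :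
    ∀ l, 1 ≤ l → l ≤ L → ∀ a : ℝ, 0 < a →
      (μ {ω | M * a ≤ ‖ν l ω - ∫ ω', ν l ω' ∂μ‖}).toReal
        < 2 * Real.exp (1 - (a - 1) ^ 2 / (2 * l)) := by
  -- the centered process
  set Z : ℕ → Ω → EuclideanSpace ℝ (Fin p) :=
    fun k ω => ν k ω - ∫ ω', ν k ω' ∂μ with hZdef
  have hZmeas : ∀ k, Measurable (Z k) := fun k => (hmeas k).sub measurable_const
  have hZint : ∀ k, Integrable (Z k) μ := fun k => (hint k).sub (integrable_const _)
  have hZzero : ∀ ω, Z 0 ω = 0 := fun ω => congrFun hZ0 ω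
  -- a.e. bound on the norm of `Z k`
  have hZae : ∀ k, k ≤ L → ∀ᵐ ω ∂μ, ‖Z k ω‖ ≤ M * k := by
    intro k
    induction k with
    | zero => intro _; filter_upwards with ω; rw [hZzero ω]; simp
    | succ n ih =>
      intro hn
      have h1 : ∀ᵐ ω ∂μ, ‖Z (n+1) ω - Z n ω‖ ≤ M := by
        have := hdiff (n+1) (by omega) hn
        simpa using this
      filter_upwards [h1, ih (by omega)] with ω hω1 hω2
      have : Z (n+1) ω = Z n ω + (Z (n+1) ω - Z n ω) := by abel
      rw [this]
      calc ‖Z n ω + (Z (n+1) ω - Z n ω)‖ ≤ ‖Z n ω‖ + ‖Z (n+1) ω - Z n ω‖ := norm_add_le _ _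
        _ ≤ M * n + M := add_le_add hω2 hω1
        _ = M * (n+1 : ℕ) := by push_cast; ring
  -- integrability of the cosh moments
  have I1 : ∀ (c : ℝ), 0 ≤ c → ∀ k, k ≤ L →
      Integrable (fun ω => Real.cosh (c * ‖Z k ω‖)) μ := by
    intro c hc k hk
    refine ⟨(Real.continuous_cosh.measurable.comp
      (measurable_const.mul (hZmeas k).norm)).aestronglyMeasurable, ?_⟩
    apply HasFiniteIntegral.of_bounded (C := Real.cosh (c * (M * k)))
    filter_upwards [hZae k hk] with ω hω
    rw [Real.norm_eq_abs, abs_of_pos (Real.cosh_pos _), Real.cosh_le_cosh]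
    rw [abs_of_nonneg (by positivity), abs_of_nonneg (by positivity)]
    exact mul_le_mul_of_nonneg_left hω hc
  -- the one-step supermartingale inequality for the cosh moment
  have hstep : ∀ (c : ℝ), 0 < c → ∀ k, k + 1 ≤ L →
      ∫ ω, Real.cosh (c * ‖Z (k+1) ω‖) ∂μ ≤
        Real.cosh (c * M) * ∫ ω, Real.cosh (c * ‖Z k ω‖) ∂μ := by
    intro c hc k hk
    set m' : MeasurableSpace Ω := MeasurableSpace.comap (Z k) inferInstance with hm'def
    have hm' : m' ≤ mΩ := (hZmeas k).comap_le
    set Y : Ω → EuclideanSpace ℝ (Fin p) :=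
      fun ω => (Real.sinh (c * ‖Z k ω‖) / ‖Z k ω‖) • Z k ω with hYdef
    set C₀ : ℝ := Real.sinh (c * (M * k)) with hC₀def
    have hφ : Measurable (fun z : EuclideanSpace ℝ (Fin p) =>
        (Real.sinh (c * ‖z‖) / ‖z‖) • z) := by
      exact ((Real.continuous_sinh.measurable.comp
        (measurable_const.mul measurable_norm)).div measurable_norm).smul measurable_id
    have hZkm' : Measurable[m'] (Z k) := by
      rw [hm'def]; exact Measurable.of_comap_le le_rfl
    have hmY : Measurable[m'] Y := hφ.comp hZkm'
    have hYm : StronglyMeasurable[m'] Y := hmY.stronglyMeasurable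
    have hYb : ∀ᵐ ω ∂μ, ‖Y ω‖ ≤ C₀ := by
      filter_upwards [hZae k (by omega)] with ω hω
      rw [hYdef]
      by_cases h0 : Z k ω = 0
      · simp only [h0, smul_zero, norm_zero]
        rw [hC₀def]
        have : (0:ℝ) ≤ c * (M * k) := by positivity
        simpa using this
      · have hA : 0 < ‖Z k ω‖ := norm_pos_iff.2 h0
        rw [norm_smul, Real.norm_eq_abs, abs_div, abs_of_nonneg
          (Real.sinh_nonneg_iff.2 (by positivity)), abs_of_pos hA]
        rw [div_mul_cancel₀ _ (ne_of_gt hA)]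
        rw [hC₀def, Real.sinh_le_sinh]
        exact mul_le_mul_of_nonneg_left hω hc.le
    have hYmeas_amb : Measurable[mΩ] Y := hφ.comp (hZmeas k)
    -- integrability of the inner-product terms
    have I3 : ∀ j, Integrable (fun ω => ⟪Y ω, Z j ω⟫) μ := by
      intro j
      refine Integrable.mono' (((hZint j).norm.const_mul C₀)) ?_ ?_
      · exact (hYmeas_amb.inner (hZmeas j)).aestronglyMeasurable
      · filter_upwards [hYb] with ω hω
        rw [Real.norm_eq_abs]
        calc |⟪Y ω, Z j ω⟫| ≤ ‖Y ω‖ * ‖Z j ω‖ := abs_real_inner_le_norm _ _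
          _ ≤ C₀ * ‖Z j ω‖ := mul_le_mul_of_nonneg_right hω (norm_nonneg _)
    have I2 : Integrable (fun ω => ⟪Y ω, Z (k+1) ω - Z k ω⟫) μ := by
      have : (fun ω => ⟪Y ω, Z (k+1) ω - Z k ω⟫)
          = fun ω => ⟪Y ω, Z (k+1) ω⟫ - ⟪Y ω, Z k ω⟫ := by
        funext ω; rw [inner_sub_right]
      rw [this]; exact (I3 (k+1)).sub (I3 k)
    -- the conditional expectation kills the linear term
    have hCE : μ[Z (k+1)|m'] =ᵐ[μ] Z k := hmart (k+1) k (by omega) hk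
    have hzero : ∫ ω, ⟪Y ω, Z (k+1) ω - Z k ω⟫ ∂μ = 0 := by
      have h1 : ∫ ω, ⟪Y ω, Z (k+1) ω - Z k ω⟫ ∂μ
          = ∫ ω, ⟪Y ω, Z (k+1) ω⟫ ∂μ - ∫ ω, ⟪Y ω, Z k ω⟫ ∂μ := by
        rw [← integral_sub (I3 (k+1)) (I3 k)]
        congr 1; funext ω; rw [inner_sub_right]
      rw [h1]
      have h2 : ∫ ω, ⟪Y ω, Z (k+1) ω⟫ ∂μ = ∫ ω, ⟪Y ω, (μ[Z (k+1)|m']) ω⟫ ∂μ :=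
        integral_inner_condexp hm' μ Y (Z (k+1)) hYm C₀ hYb (hZint (k+1))
      have h3 : ∫ ω, ⟪Y ω, (μ[Z (k+1)|m']) ω⟫ ∂μ = ∫ ω, ⟪Y ω, Z k ω⟫ ∂μ := by
        apply integral_congr_ae
        filter_upwards [hCE] with ω hω
        rw [hω]
      rw [h2, h3, sub_self]
    -- pointwise inequality and integration
    have hpt : ∀ᵐ ω ∂μ, Real.cosh (c * ‖Z (k+1) ω‖) ≤
        Real.cosh (c * M) * Real.cosh (c * ‖Z k ω‖)
          + Real.sinh (c * M) / M * ⟪Y ω, Z (k+1) ω - Z k ω⟫ := by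
      have hd : ∀ᵐ ω ∂μ, ‖Z (k+1) ω - Z k ω‖ ≤ M := by
        have := hdiff (k+1) (by omega) hk
        simpa using this
      filter_upwards [hd] with ω hω
      have heq : Z k ω + (Z (k+1) ω - Z k ω) = Z (k+1) ω := by abel
      have hkv := key_vector c M hc.le hM (Z k ω) (Z (k+1) ω - Z k ω) hω
      rw [heq] at hkv
      exact hkv
    calc ∫ ω, Real.cosh (c * ‖Z (k+1) ω‖) ∂μ
        ≤ ∫ ω, (Real.cosh (c * M) * Real.cosh (c * ‖Z k ω‖)
          + Real.sinh (c * M) / M * ⟪Y ω, Z (k+1) ω - Z k ω⟫) ∂μ := by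
          apply integral_mono_ae (I1 c hc.le (k+1) hk)
            (((I1 c hc.le k (by omega)).const_mul _).add (I2.const_mul _)) hpt
      _ = Real.cosh (c * M) * ∫ ω, Real.cosh (c * ‖Z k ω‖) ∂μ
          + Real.sinh (c * M) / M * ∫ ω, ⟪Y ω, Z (k+1) ω - Z k ω⟫ ∂μ := by
          rw [integral_add ((I1 c hc.le k (by omega)).const_mul _) (I2.const_mul _),
            integral_const_mul, integral_const_mul]
      _ = Real.cosh (c * M) * ∫ ω, Real.cosh (c * ‖Z k ω‖) ∂μ := by
          rw [hzero, mul_zero, add_zero]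
  -- iterate the one-step inequality
  have hmom : ∀ (c : ℝ), 0 < c → ∀ k, k ≤ L →
      ∫ ω, Real.cosh (c * ‖Z k ω‖) ∂μ ≤ (Real.cosh (c * M)) ^ k := by
    intro c hc k
    induction k with
    | zero =>
      intro _
      have : ∀ ω, Real.cosh (c * ‖Z 0 ω‖) = 1 := by
        intro ω; rw [hZzero ω]; simp
      simp only [this]
      simp
    | succ n ih =>
      intro hn
      calc ∫ ω, Real.cosh (c * ‖Z (n+1) ω‖) ∂μ
          ≤ Real.cosh (c * M) * ∫ ω, Real.cosh (c * ‖Z n ω‖) ∂μ := hstep c hc n hn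
        _ ≤ Real.cosh (c * M) * (Real.cosh (c * M)) ^ n := by
            exact mul_le_mul_of_nonneg_left (ih (by omega)) (Real.cosh_pos _).le
        _ = (Real.cosh (c * M)) ^ (n+1) := by ring
  -- now the tail bound
  intro l hl1 hlL a ha
  have hlpos : (0:ℝ) < l := by exact_mod_cast hl1
  have hRHSpos : 0 < 2 * Real.exp (1 - (a - 1) ^ 2 / (2 * l)) := by positivity
  by_cases hcase : (l:ℝ) < a
  · -- impossible deviation: the set is null
    have hnull : μ {ω | M * a ≤ ‖Z l ω‖} = 0 := by
      apply measure_eq_zero_iff_ae_notMem.mpr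
      filter_upwards [hZae l hlL] with ω hω hmem
      have h1 : M * a ≤ M * l := le_trans hmem hω
      have h2 := (mul_le_mul_iff_right₀ hM).1 h1
      linarith
    show (μ {ω | M * a ≤ ‖Z l ω‖}).toReal < _
    rw [hnull, ENNReal.toReal_zero]
    exact hRHSpos
  · push_neg at hcase
    set c : ℝ := a / (l * M) with hcdef
    have hc : 0 < c := by
      rw [hcdef]; positivity
    have hcM : c * M = a / l := by
      rw [hcdef]; field_simp
    have hcMa : c * (M * a) = a ^ 2 / l := by
      rw [hcdef]; field_simp
    -- Markov
    have hmarkov : Real.cosh (c * (M * a)) * (μ {ω | M * a ≤ ‖Z l ω‖}).toReal ≤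
        ∫ ω, Real.cosh (c * ‖Z l ω‖) ∂μ := by
      have hsub : {ω | M * a ≤ ‖Z l ω‖} ⊆
          {ω | Real.cosh (c * (M * a)) ≤ Real.cosh (c * ‖Z l ω‖)} := by
        intro ω hω
        simp only [Set.mem_setOf_eq] at *
        rw [Real.cosh_le_cosh, abs_of_nonneg (by positivity), abs_of_nonneg (by positivity)]
        exact mul_le_mul_of_nonneg_left hω hc.le
      have h1 : (μ {ω | M * a ≤ ‖Z l ω‖}).toReal ≤
          (μ {ω | Real.cosh (c * (M * a)) ≤ Real.cosh (c * ‖Z l ω‖)}).toReal := by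
        apply ENNReal.toReal_mono (measure_ne_top μ _) (measure_mono hsub)
      calc Real.cosh (c * (M * a)) * (μ {ω | M * a ≤ ‖Z l ω‖}).toReal
          ≤ Real.cosh (c * (M * a)) *
            (μ {ω | Real.cosh (c * (M * a)) ≤ Real.cosh (c * ‖Z l ω‖)}).toReal := by
            exact mul_le_mul_of_nonneg_left h1 (Real.cosh_pos _).le
        _ ≤ ∫ ω, Real.cosh (c * ‖Z l ω‖) ∂μ := by
            apply mul_meas_ge_le_integral_of_nonneg
            · exact Filter.Eventually.of_forall (fun ω => (Real.cosh_pos _).le)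
            · exact I1 c hc.le l hlL
    have hEbound : ∫ ω, Real.cosh (c * ‖Z l ω‖) ∂μ ≤ Real.exp (a ^ 2 / (2 * l)) := by
      calc ∫ ω, Real.cosh (c * ‖Z l ω‖) ∂μ ≤ (Real.cosh (c * M)) ^ l := hmom c hc l hlL
        _ ≤ (Real.exp ((c*M) ^ 2 / 2)) ^ l := by
            apply pow_le_pow_left₀ (Real.cosh_pos _).le (Real.cosh_le_exp_half_sq _)
        _ = Real.exp (l * ((c*M) ^ 2 / 2)) := by
            rw [← Real.exp_nat_mul]
        _ = Real.exp (a ^ 2 / (2 * l)) := by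
            congr 1
            rw [hcM]
            field_simp
    have hcoshlb : Real.exp (a ^ 2 / l) / 2 ≤ Real.cosh (c * (M * a)) := by
      rw [hcMa]
      rw [Real.cosh_eq]
      have := Real.exp_pos (-(a^2/l))
      linarith
    -- combine
    have hclt : (μ {ω | M * a ≤ ‖Z l ω‖}).toReal ≤ 2 * Real.exp (- a ^ 2 / (2 * l)) := by
      have hcpos : 0 < Real.cosh (c * (M * a)) := Real.cosh_pos _
      have h2 : (μ {ω | M * a ≤ ‖Z l ω‖}).toReal ≤
          Real.exp (a ^ 2 / (2 * l)) / Real.cosh (c * (M * a)) := by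
        rw [le_div_iff₀ hcpos, mul_comm]
        exact le_trans hmarkov hEbound
      have h3 : Real.exp (a ^ 2 / (2 * l)) / Real.cosh (c * (M * a)) ≤
          Real.exp (a ^ 2 / (2 * l)) / (Real.exp (a ^ 2 / l) / 2) := by
        apply div_le_div_of_nonneg_left (Real.exp_pos _).le _ hcoshlb
        positivity
      have e1 : - a ^ 2 / (2 * (l:ℝ)) = a ^ 2 / (2 * l) - a ^ 2 / l := by
        field_simp
        ring
      have h4 : Real.exp (a ^ 2 / (2 * l)) / (Real.exp (a ^ 2 / l) / 2)
          = 2 * Real.exp (- a ^ 2 / (2 * l)) := by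
        rw [e1, Real.exp_sub]
        have := (Real.exp_pos (a ^ 2 / (l:ℝ))).ne'
        field_simp
      linarith
    refine lt_of_le_of_lt hclt ?_
    have hl1' : (1:ℝ) ≤ l := by exact_mod_cast hl1
    have hkey : (a-1)^2 - a^2 < 2 * (l:ℝ) := by nlinarith
    apply mul_lt_mul_of_pos_left _ (by norm_num : (0:ℝ) < 2)
    rw [Real.exp_lt_exp]
    have h2l : (0:ℝ) < 2 * l := by positivity
    have h5 : ((a-1)^2 - a^2) / (2*l) < 1 := (div_lt_one h2l).2 hkey
    have h6 : ((a-1)^2 - a^2) / (2*l) = (a-1)^2/(2*l) - a^2/(2*l) := sub_div _ _ _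
    have h7 : -a^2/(2*l) = -(a^2/(2*l)) := by ring
    linarith
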